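/- For every positive integer n there exists M such that for all m ≥ M, the quantity e(m,n) = ((2m+n-1)!/(2m)!)·∏_{k=1}^{m} 1/|ζ(1-2k)| satisfies e(m,n) < 1, and in particular e(m,n) is not an integer. -/

import Mathlib

open Finset

/-- `e(m,n) = ((2m+n-1)!/(2m)!)·∏_{k=1}^m 1/|ζ(1-2k)|`. -/
noncomputable def eSeq (m n : ℕ) : ℝ :=
  (Nat.factorial (2 * m + n - 1) : ℝ) / (Nat.factorial (2 * m)) *
    ∏ k ∈ Icc 1 m, 1 / ‖riemannZeta (1 - 2 * k)‖

open Real Filter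

lemma abs_zeta_eq (k : ℕ) (hk : 1 ≤ k) :
    ‖riemannZeta (1 - 2 * k)‖ = |(bernoulli (2 * k) : ℝ)| / (2 * k) := by
  have h1 : (1 : ℂ) - 2 * k = -((2 * k - 1 : ℕ) : ℂ) := by
    have h : (1:ℕ) ≤ 2 * k := by omega
    push_cast [h]
    ring
  rw [h1, riemannZeta_neg_nat_eq_bernoulli]
  have h2 : 2 * k - 1 + 1 = 2 * k := by omega
  rw [h2, norm_div, norm_mul, norm_pow]
  simp only [norm_neg, norm_one, one_pow, one_mul, Complex.norm_natCast]
  congr 1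
  · rw [← Complex.ofReal_ratCast, Complex.norm_real, Real.norm_eq_abs]
  have h3 : ((2 * k - 1 : ℕ) : ℂ) + 1 = ((2 * k : ℕ) : ℂ) := by exact_mod_cast congrArg Nat.cast h2
  rw [h3, Complex.norm_natCast]
  push_cast
  ring

lemma bernoulli_lb (k : ℕ) (hk : 1 ≤ k) :
    ((2 * k).factorial : ℝ) / (2 ^ (2 * k - 1) * π ^ (2 * k)) ≤ |(bernoulli (2 * k) : ℝ)| := by
  have hs := hasSum_zeta_nat (k := k) (by omega)
  set S : ℝ := (-1 : ℝ) ^ (k + 1) * (2 : ℝ) ^ (2 * k - 1) * π ^ (2 * k) *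
    bernoulli (2 * k) / (2 * k).factorial with hS
  have h1 : (1 : ℝ) ≤ S := by
    have := le_hasSum hs 1 (fun j _ => by positivity)
    simpa using this
  have habs : S ≤ 2 ^ (2 * k - 1) * π ^ (2 * k) * |(bernoulli (2 * k) : ℝ)| /
      (2 * k).factorial := by
    calc S ≤ |S| := le_abs_self _
    _ = 2 ^ (2 * k - 1) * π ^ (2 * k) * |(bernoulli (2 * k) : ℝ)| / (2 * k).factorial := by
        rw [hS, abs_div, abs_mul, abs_mul, abs_mul, abs_pow, abs_pow, abs_pow, abs_neg, abs_one,
          one_pow, one_mul, abs_of_nonneg (by norm_num : (0:ℝ) ≤ 2),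
          abs_of_nonneg pi_pos.le, Nat.abs_cast]
  have hfac : (0:ℝ) < (2 * k).factorial := by positivity
  have h2 : ((2 * k).factorial : ℝ) ≤ 2 ^ (2 * k - 1) * π ^ (2 * k) *
      |(bernoulli (2 * k) : ℝ)| := by
    have := h1.trans habs
    rw [le_div_iff₀ hfac] at this
    linarith
  rw [div_le_iff₀ (by positivity)]
  nlinarith [abs_nonneg (bernoulli (2 * k) : ℝ)]

lemma zeta_lb (k : ℕ) (hk : 1 ≤ k) :
    ((2 * k - 1).factorial : ℝ) / (2 ^ (2 * k - 1) * π ^ (2 * k)) ≤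
      ‖riemannZeta (1 - 2 * k)‖ := by
  rw [abs_zeta_eq k hk]
  have hb := bernoulli_lb k hk
  have hfac : ((2 * k).factorial : ℝ) = (2 * k) * (2 * k - 1).factorial := by
    rw_mod_cast [Nat.mul_factorial_pred (by omega)]
  rw [div_le_div_iff₀ (by positivity) (by positivity)]
  rw [div_le_iff₀ (by positivity)] at hb
  have hkpos : (0:ℝ) < 2 * k := by positivity
  have hfp : (0:ℝ) < ((2 * k - 1).factorial : ℝ) := by positivity
  nlinarith [hb]

lemma zeta_pos (k : ℕ) (hk : 1 ≤ k) : 0 < ‖riemannZeta (1 - 2 * k)‖ :=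
  lt_of_lt_of_le (by positivity) (zeta_lb k hk)

lemma fact_le_fact_mul_pow : ∀ (a j : ℕ), (a + j).factorial ≤ a.factorial * (a + j) ^ j
  | _, 0 => by simp
  | a, j + 1 => by
    calc (a + (j + 1)).factorial = (a + j + 1) * (a + j).factorial := by
          rw [show a + (j + 1) = (a + j) + 1 by ring, Nat.factorial_succ]
    _ ≤ (a + j + 1) * (a.factorial * (a + j) ^ j) :=
        Nat.mul_le_mul_left _ (fact_le_fact_mul_pow a j)
    _ ≤ (a + j + 1) * (a.factorial * (a + j + 1) ^ j) := by
        exact Nat.mul_le_mul_left _ (Nat.mul_le_mul_left _ (Nat.pow_le_pow_left (by omega) j))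
    _ = a.factorial * (a + (j + 1)) ^ (j + 1) := by ring

lemma eSeq_pos (m n : ℕ) : 0 < eSeq m n := by
  unfold eSeq
  apply mul_pos (by positivity)
  exact Finset.prod_pos fun k hk => by
    have := zeta_pos k (Finset.mem_Icc.mp hk).1
    positivity

lemma zeta_small : ∃ K : ℕ, 1 ≤ K ∧ ∀ k, K ≤ k →
    1 / ‖riemannZeta (1 - 2 * k)‖ ≤ 1 / 4 := by
  have ht := FloorSemiring.tendsto_pow_div_factorial_atTop (K := ℝ) (2 * π)
  have hev : ∀ᶠ j : ℕ in atTop, (2 * π) ^ j / (j.factorial : ℝ) < 1 / (4 * π) :=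
    ht.eventually (gt_mem_nhds (by positivity))
  obtain ⟨N, hN⟩ := eventually_atTop.mp hev
  refine ⟨N + 1, by omega, fun k hk => ?_⟩
  have hk1 : 1 ≤ k := by omega
  have h4 : (4 : ℝ) ≤ ‖riemannZeta (1 - 2 * k)‖ := by
    refine le_trans ?_ (zeta_lb k hk1)
    have hj := hN (2 * k - 1) (by omega)
    have hfp : (0 : ℝ) < ((2 * k - 1).factorial : ℝ) := by positivity
    rw [div_lt_div_iff₀ hfp (by positivity)] at hj
    have hD : (2 : ℝ) ^ (2 * k - 1) * π ^ (2 * k) = π * (2 * π) ^ (2 * k - 1) := by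
      obtain ⟨j, hj2⟩ : ∃ j, 2 * k = j + 1 := ⟨2 * k - 1, by omega⟩
      rw [hj2, Nat.add_sub_cancel, pow_succ, mul_pow]; ring
    rw [le_div_iff₀ (by positivity), hD]
    nlinarith [hj]
  exact one_div_le_one_div_of_le (by norm_num) h4

/-- For every positive `n` there is `M` such that for all `m ≥ M` we have
`e(m,n) < 1`; in particular `e(m,n)` is not an integer. -/
theorem eSeq_eventually_lt_one (n : ℕ) (hn : 1 ≤ n) :
    ∃ M : ℕ, ∀ m : ℕ, M ≤ m →
      eSeq m n < 1 ∧ ¬∃ z : ℤ, eSeq m n = (z : ℝ) := by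
  obtain ⟨K, hK1, hK⟩ := zeta_small
  set C : ℝ := ∏ k ∈ Icc 1 K, 1 / ‖riemannZeta (1 - 2 * k)‖ with hC
  have hCpos : 0 < C := Finset.prod_pos fun k hk => by
    have := zeta_pos k (Finset.mem_Icc.mp hk).1
    positivity
  set D : ℝ := (2 + n : ℝ) ^ n * C * 4 ^ K with hD
  have hDpos : 0 < D := by positivity
  have ht : Filter.Tendsto (fun m : ℕ => D * ((m : ℝ) ^ n * (1 / 4 : ℝ) ^ m)) atTop (nhds 0) := by
    have h := tendsto_pow_const_mul_const_pow_of_lt_one n (r := (1 / 4 : ℝ))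
      (by norm_num) (by norm_num)
    simpa using h.const_mul D
  obtain ⟨M₀, hM₀⟩ := eventually_atTop.mp (ht.eventually (gt_mem_nhds one_pos))
  refine ⟨max M₀ (max K 1), fun m hm => ?_⟩
  have hmK : K ≤ m := le_trans (le_trans (le_max_left _ _) (le_max_right _ _)) hm
  have hm1 : 1 ≤ m := le_trans (le_trans (le_max_right _ _) (le_max_right _ _)) hm
  have hmM : M₀ ≤ m := le_trans (le_max_left _ _) hm
  have hpos : 0 < eSeq m n := eSeq_pos m n
  have hbound : eSeq m n ≤ D * ((m : ℝ) ^ n * (1 / 4 : ℝ) ^ m) := by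
    unfold eSeq
    have hsplit : (∏ k ∈ Icc 1 m, 1 / ‖riemannZeta (1 - 2 * k)‖) =
        C * ∏ k ∈ Ioc K m, 1 / ‖riemannZeta (1 - 2 * k)‖ := by
      rw [hC, show Icc 1 m = Ioc 0 m from Finset.Icc_add_one_left_eq_Ioc 0 m,
        show Icc 1 K = Ioc 0 K from Finset.Icc_add_one_left_eq_Ioc 0 K,
        Finset.prod_Ioc_consecutive _ (Nat.zero_le K) hmK]
    have hQ : (∏ k ∈ Ioc K m, 1 / ‖riemannZeta (1 - 2 * k)‖) ≤
        (1 / 4 : ℝ) ^ (m - K) := by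
      have h := Finset.prod_le_prod (s := Ioc K m)
        (f := fun k : ℕ => 1 / ‖riemannZeta (1 - 2 * k)‖) (g := fun _ => (1 / 4 : ℝ))
        (fun k hk => by
          have hk1 : 1 ≤ k := by have := (Finset.mem_Ioc.mp hk).1; omega
          have := zeta_pos k hk1; positivity)
        (fun k hk => hK k (by have := (Finset.mem_Ioc.mp hk).1; omega))
      simpa [Nat.card_Ioc] using h
    have hQnn : (0:ℝ) ≤ ∏ k ∈ Ioc K m, 1 / ‖riemannZeta (1 - 2 * k)‖ :=
      Finset.prod_nonneg fun k _ => by positivity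
    have hR : ((2 * m + n - 1).factorial : ℝ) / ((2 * m).factorial : ℝ) ≤
        ((2 * m + n : ℕ) : ℝ) ^ n := by
      rw [div_le_iff₀ (by positivity)]
      have h1 : (2 * m + n - 1).factorial ≤ (2 * m + n) ^ n * (2 * m).factorial := by
        calc (2 * m + n - 1).factorial = (2 * m + (n - 1)).factorial := by congr 1; omega
        _ ≤ (2 * m).factorial * (2 * m + (n - 1)) ^ (n - 1) := fact_le_fact_mul_pow _ _
        _ ≤ (2 * m).factorial * (2 * m + n) ^ n := by
            refine Nat.mul_le_mul_left _ ?_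
            calc (2 * m + (n - 1)) ^ (n - 1) ≤ (2 * m + n) ^ (n - 1) :=
                Nat.pow_le_pow_left (by omega) _
            _ ≤ (2 * m + n) ^ n := Nat.pow_le_pow_right (by omega) (by omega)
        _ = (2 * m + n) ^ n * (2 * m).factorial := by ring
      exact_mod_cast h1
    have hgeo : (1 / 4 : ℝ) ^ (m - K) = 4 ^ K * (1 / 4 : ℝ) ^ m := by
      have h5 : ((1 / 4 : ℝ)) ^ K * 4 ^ K = 1 := by rw [← mul_pow]; norm_num
      calc (1 / 4 : ℝ) ^ (m - K) = (1 / 4 : ℝ) ^ (m - K) * ((1 / 4 : ℝ) ^ K * 4 ^ K) := by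
            rw [h5, mul_one]
      _ = ((1 / 4 : ℝ) ^ (m - K) * (1 / 4 : ℝ) ^ K) * 4 ^ K := by ring
      _ = (1 / 4 : ℝ) ^ m * 4 ^ K := by rw [← pow_add, show m - K + K = m by omega]
      _ = 4 ^ K * (1 / 4 : ℝ) ^ m := by ring
    rw [hsplit]
    calc ((2 * m + n - 1).factorial : ℝ) / ((2 * m).factorial : ℝ) *
        (C * ∏ k ∈ Ioc K m, 1 / ‖riemannZeta (1 - 2 * k)‖)
        ≤ ((2 * m + n : ℕ) : ℝ) ^ n * (C * (1 / 4 : ℝ) ^ (m - K)) := by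
          apply mul_le_mul hR (mul_le_mul_of_nonneg_left hQ hCpos.le)
            (mul_nonneg hCpos.le hQnn) (by positivity)
    _ ≤ ((2 + n : ℝ) * m) ^ n * (C * (1 / 4 : ℝ) ^ (m - K)) := by
          have hbase : ((2 * m + n : ℕ) : ℝ) ≤ (2 + n : ℝ) * m := by
            have hm1' : (1 : ℝ) ≤ (m : ℝ) := by exact_mod_cast hm1
            push_cast
            nlinarith [Nat.cast_nonneg (α := ℝ) n]
          have hpow : ((2 * m + n : ℕ) : ℝ) ^ n ≤ ((2 + n : ℝ) * m) ^ n :=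
            pow_le_pow_left₀ (by positivity) hbase n
          exact mul_le_mul_of_nonneg_right hpow (by positivity)
    _ = D * ((m : ℝ) ^ n * (1 / 4 : ℝ) ^ m) := by
          rw [hgeo, hD, mul_pow]; ring
  have hlt : eSeq m n < 1 := lt_of_le_of_lt hbound (hM₀ m hmM)
  refine ⟨hlt, ?_⟩
  rintro ⟨z, hz⟩
  have h0 : (0 : ℝ) < (z : ℝ) := hz ▸ hpos
  have h1 : (z : ℝ) < 1 := hz ▸ hlt
  have hz0 : (0 : ℤ) < z := by exact_mod_cast h0
  have hz1 : z < 1 := by exact_mod_cast h1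
  omega
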